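/- Let p be a stochastic tournament on a finite set V and let r be a vertex of V. Then there exists a stochastic tournament p' on V such that: (1) p' is reversible; (2) p' x y = p x y whenever x = r or y = r; and (3) for all distinct x, y in V \ {r}, |p' x y − p x y| ≤ disc(x, y, r), where disc is the discrepancy of the triangle (x, y, r). -/

import Mathlib

/-- The discrepancy of the triangle `(x, y, z)` of a stochastic tournament `p`. -/
noncomputable def disc {V : Type*} (p : V → V → ℝ) (x y z : V) : ℝ :=
  max |p x y - p z y * p x z / (p z y * p x z + p y z * p z x)|
    (max |p y z - p y x * p x z / (p y x * p x z + p x y * p z x)|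
      |p z x - p y x * p z y / (p y x * p z y + p x y * p y z)|)

/-- Given any stochastic tournament `p` and vertex `r`, there is a reversible
stochastic tournament `p'` agreeing with `p` on all edges at `r`, and differing
on the edge `xy` by at most the discrepancy of the triangle `(x, y, r)`. -/
theorem exists_reversible_fixing_star {V : Type*} [Fintype V]
    (p : V → V → ℝ)
    (hp : ∀ x y : V, x ≠ y → 0 < p x y ∧ p x y < 1 ∧ p x y + p y x = 1)
    (r : V) :
    ∃ p' : V → V → ℝ,
      (∀ x y : V, x ≠ y → 0 < p' x y ∧ p' x y < 1 ∧ p' x y + p' y x = 1) ∧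
      (∃ π : V → ℝ, (∀ x, 0 < π x) ∧ (∑ x, π x) = 1 ∧
        ∀ x y : V, x ≠ y → π x * p' x y = π y * p' y x) ∧
      (∀ x y : V, x ≠ y → (x = r ∨ y = r) → p' x y = p x y) ∧
      (∀ x y : V, x ≠ y → x ≠ r → y ≠ r → |p' x y - p x y| ≤ disc p x y r) := by
  classical
  set w : V → ℝ := fun x => if x = r then 1 else p r x / p x r with hwdef
  have hw : ∀ x, 0 < w x := by
    intro x
    by_cases hx : x = r
    · simp [hwdef, hx]
    · have h1 := (hp r x (Ne.symm hx)).1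
      have h2 := (hp x r hx).1
      simp only [hwdef, if_neg hx]
      positivity
  have hwadd : ∀ x y : V, 0 < w x + w y := fun x y => by
    have := hw x; have := hw y; linarith
  have hkey : ∀ y : V, y ≠ r → w y / (w r + w y) = p r y := by
    intro y hyr
    have h1 := (hp y r hyr).1
    have h3 := (hp y r hyr).2.2
    have h1' : p y r ≠ 0 := h1.ne'
    simp only [hwdef, if_pos rfl, if_neg hyr]
    have hden : 1 + p r y / p y r = 1 / p y r := by
      field_simp
      linarith
    rw [hden]
    field_simp
  refine ⟨fun x y => w y / (w x + w y), ?_, ?_, ?_, ?_⟩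
  · intro x y _
    refine ⟨by have := hw y; have := hwadd x y; positivity, ?_, ?_⟩
    · show w y / (w x + w y) < 1
      rw [div_lt_one (hwadd x y)]; have := hw x; linarith
    · show w y / (w x + w y) + w x / (w y + w x) = 1
      rw [add_comm (w y) (w x)]
      rw [← add_div, add_comm (w y) (w x), div_self (hwadd x y).ne']
  · have hS : 0 < ∑ x, w x := by
      have : Nonempty V := ⟨r⟩
      exact Finset.sum_pos (fun x _ => hw x) Finset.univ_nonempty
    refine ⟨fun x => w x / ∑ z, w z, fun x => by have := hw x; positivity, ?_, ?_⟩
    · rw [← Finset.sum_div, div_self hS.ne']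
    · intro x y _
      show w x / (∑ z, w z) * (w y / (w x + w y)) = w y / (∑ z, w z) * (w x / (w y + w x))
      rw [add_comm (w y) (w x)]
      ring
  · intro x y hxy hr
    rcases hr with hr | hr
    · show w y / (w x + w y) = p x y
      rw [hr]
      exact hkey y (fun h => hxy (hr.trans h.symm))
    · show w y / (w x + w y) = p x y
      rw [hr]
      have hxr : x ≠ r := fun h => hxy (h.trans hr.symm)
      have h1 := (hp x r hxr).1
      have h2 := (hp r x (Ne.symm hxr)).1
      have h3 := (hp x r hxr).2.2
      simp only [hwdef, if_pos rfl, if_neg hxr]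
      have hd : (0:ℝ) < p r x / p x r + 1 := by positivity
      rw [div_eq_iff hd.ne']
      field_simp
      linarith
  · intro x y hxy hxr hyr
    have h1 := (hp x r hxr).1
    have h2 := (hp r x (Ne.symm hxr)).1
    have h3 := (hp y r hyr).1
    have h4 := (hp r y (Ne.symm hyr)).1
    have key : w y / (w x + w y) = p r y * p x r / (p r y * p x r + p y r * p r x) := by
      simp only [hwdef, if_neg hxr, if_neg hyr]
      rw [div_eq_div_iff (by simpa only [hwdef, if_neg hxr, if_neg hyr] using (hwadd x y).ne')
        (by positivity)]
      field_simp
      ring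
    show |w y / (w x + w y) - p x y| ≤ disc p x y r
    rw [key, abs_sub_comm]
    exact le_max_left _ _
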